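/- Let R be a nontrivial commutative ring with identity having more than one nonzero zero-divisor. Then diam(Γ(R)) = 2 if and only if either (i) R is isomorphic to a subring of a product of two integral domains and R is not isomorphic to ℤ/2ℤ × ℤ/2ℤ, or (ii) Z(R) is an ideal of R, Z(R)² ≠ (0), and for each pair of distinct zero-divisors x, y of R one has ann(x,y) ≠ (0). -/

import Mathlib

/-- The set of zero-divisors of a commutative ring (including `0`). -/
def zdSet (R : Type*) [CommRing R] : Set R :=
  {x : R | ∃ y : R, y ≠ 0 ∧ x * y = 0}

/-- The set of nonzero zero-divisors. -/
def zdStar (R : Type*) [CommRing R] : Set R :=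
  {x : R | x ≠ 0 ∧ ∃ y : R, y ≠ 0 ∧ x * y = 0}

/-- The zero-divisor graph `Γ(R)`: vertices are the nonzero zero-divisors, and distinct
`x`, `y` are adjacent iff `x * y = 0`. -/
def zdGraph (R : Type*) [CommRing R] : SimpleGraph (zdStar R) where
  Adj x y := x.1 ≠ y.1 ∧ x.1 * y.1 = 0
  symm := ⟨fun x y h => ⟨h.1.symm, by rw [mul_comm]; exact h.2⟩⟩
  loopless := ⟨fun x h => h.1 rfl⟩

/-- The extended zero-divisor graph `Γ̃(R)`: vertices are the nonzero zero-divisors, and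
distinct `x`, `y` are adjacent iff `x * y = 0` or `x + y ∈ Z(R)`. -/
def zdExtGraph (R : Type*) [CommRing R] : SimpleGraph (zdStar R) where
  Adj x y := x.1 ≠ y.1 ∧ (x.1 * y.1 = 0 ∨ x.1 + y.1 ∈ zdSet R)
  symm := ⟨fun x y h => ⟨h.1.symm, by rw [mul_comm, add_comm]; exact h.2⟩⟩
  loopless := ⟨fun x h => h.1 rfl⟩

universe u


section Aux

set_option linter.unusedSectionVars false

variable {R : Type u} [CommRing R] [Nontrivial R]

lemma mem_zdStar_iff {x : R} : x ∈ zdStar R ↔ x ≠ 0 ∧ ∃ y : R, y ≠ 0 ∧ x * y = 0 :=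
  Iff.rfl

lemma mem_zdSet_iff {x : R} : x ∈ zdSet R ↔ ∃ y : R, y ≠ 0 ∧ x * y = 0 :=
  Iff.rfl

/-- diameter-two pair property -/
def P2 (R : Type u) [CommRing R] : Prop :=
  ∀ s t : R, s ∈ zdStar R → t ∈ zdStar R → s ≠ t → s * t ≠ 0 →
    ∃ a : R, a ≠ 0 ∧ a * s = 0 ∧ a * t = 0

lemma walk_mid {V : Type*} {G : SimpleGraph V} {u v : V} (p : G.Walk u v)
    (h : p.length ≤ 2) (hne : u ≠ v) (hnadj : ¬ G.Adj u v) :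
    ∃ m, G.Adj u m ∧ G.Adj m v := by
  cases p with
  | nil => exact absurd rfl hne
  | cons h' q =>
    cases q with
    | nil => exact absurd h' hnadj
    | cons h'' r =>
      cases r with
      | nil => exact ⟨_, h', h''⟩
      | cons h3 r' => simp [SimpleGraph.Walk.length_cons] at h

lemma P2_of_ediam (h : (zdGraph R).ediam = 2) : P2 R := by
  intro s t hs ht hne hprod
  set S : zdStar R := ⟨s, hs⟩
  set T : zdStar R := ⟨t, ht⟩
  have hST : S ≠ T := fun hh => hne (congrArg Subtype.val hh)
  have hnadj : ¬ (zdGraph R).Adj S T := fun hh => hprod hh.2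
  have hle : (zdGraph R).edist S T ≤ 2 := h ▸ SimpleGraph.edist_le_ediam
  have hnt : (zdGraph R).edist S T ≠ ⊤ := fun hh => by simp [hh] at hle
  obtain ⟨p, hp⟩ := SimpleGraph.exists_walk_of_edist_ne_top hnt
  have hplen : p.length ≤ 2 := by
    have : ((p.length : ℕ∞)) ≤ 2 := hp ▸ hle
    exact_mod_cast this
  obtain ⟨m, h1, h2⟩ := walk_mid p hplen hST hnadj
  refine ⟨m.1, m.2.1, ?_, ?_⟩
  · rw [mul_comm]; exact h1.2
  · exact h2.2

lemma ediam_le_two_of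
    (h2 : ∀ s t : R, s ∈ zdStar R → t ∈ zdStar R → s ≠ t → s * t ≠ 0 →
      ∃ a, a ∈ zdStar R ∧ a ≠ s ∧ a ≠ t ∧ s * a = 0 ∧ a * t = 0) :
    (zdGraph R).ediam ≤ 2 := by
  rw [SimpleGraph.ediam_le_iff]
  intro U V
  by_cases hUV : U = V
  · simp [hUV]
  have hne : U.1 ≠ V.1 := fun hh => hUV (Subtype.ext hh)
  by_cases hprod : U.1 * V.1 = 0
  · have : (zdGraph R).Adj U V := ⟨hne, hprod⟩
    calc (zdGraph R).edist U V ≤ 1 := by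
          rw [SimpleGraph.edist_eq_one_iff_adj.mpr this]
      _ ≤ 2 := by norm_num
  · obtain ⟨a, ha, haU, haV, h1, h2⟩ := h2 U.1 V.1 U.2 V.2 hne hprod
    set A : zdStar R := ⟨a, ha⟩
    have adj1 : (zdGraph R).Adj U A := ⟨fun hh => haU (by exact hh.symm), h1⟩
    have adj2 : (zdGraph R).Adj A V := ⟨haV, h2⟩
    calc (zdGraph R).edist U V ≤ (zdGraph R).edist U A + (zdGraph R).edist A V :=
          SimpleGraph.edist_triangle
      _ ≤ 1 + 1 := add_le_add
          (le_of_eq (SimpleGraph.edist_eq_one_iff_adj.mpr adj1))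
          (le_of_eq (SimpleGraph.edist_eq_one_iff_adj.mpr adj2))
      _ = 2 := by norm_num

lemma two_le_ediam_of (s t : R) (hs : s ∈ zdStar R) (ht : t ∈ zdStar R)
    (hne : s ≠ t) (hprod : s * t ≠ 0) : 2 ≤ (zdGraph R).ediam := by
  set S : zdStar R := ⟨s, hs⟩
  set T : zdStar R := ⟨t, ht⟩
  have h0 : (zdGraph R).edist S T ≠ 0 := fun hh =>
    hne (congrArg Subtype.val (SimpleGraph.edist_eq_zero_iff.mp hh))
  have h1 : (zdGraph R).edist S T ≠ 1 := fun hh =>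
    hprod (SimpleGraph.edist_eq_one_iff_adj.mp hh).2
  have : 2 ≤ (zdGraph R).edist S T := by
    have hlt : 1 < (zdGraph R).edist S T :=
      lt_of_le_of_ne (ENat.one_le_iff_ne_zero.mpr h0) (Ne.symm h1)
    exact Order.add_one_le_of_lt hlt
  exact this.trans SimpleGraph.edist_le_ediam

lemma exists_nonadj (h : (zdGraph R).ediam = 2) :
    ∃ s t : R, s ∈ zdStar R ∧ t ∈ zdStar R ∧ s ≠ t ∧ s * t ≠ 0 := by
  by_contra hno
  push_neg at hno
  have hle : (zdGraph R).ediam ≤ 1 := by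
    rw [SimpleGraph.ediam_le_iff]
    intro U V
    by_cases hUV : U = V
    · simp [hUV]
    have hne : U.1 ≠ V.1 := fun hh => hUV (Subtype.ext hh)
    have hadj : (zdGraph R).Adj U V := ⟨hne, hno U.1 V.1 U.2 V.2 hne⟩
    rw [SimpleGraph.edist_eq_one_iff_adj.mpr hadj]
  rw [h] at hle
  norm_num at hle


lemma not_iso_of_ediam (h : (zdGraph R).ediam = 2) :
    ¬ Nonempty (R ≃+* (ZMod 2 × ZMod 2)) := by
  rintro ⟨e⟩
  obtain ⟨s, t, hs, ht, hne, hprod⟩ := exists_nonadj h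
  obtain ⟨hs0, vs, hvs0, hsvs⟩ := hs
  obtain ⟨ht0, vt, hvt0, htvt⟩ := ht
  have he0 : ∀ r : R, e r = 0 → r = 0 := fun r hr =>
    e.injective (by rw [hr, map_zero])
  have key1 : ∀ p pk : ZMod 2 × ZMod 2, p ≠ 0 → pk ≠ 0 → p * pk = 0 →
      p = (1, 0) ∨ p = (0, 1) := by decide
  have key2 : ∀ p q : ZMod 2 × ZMod 2, (p = ((1 : ZMod 2), (0 : ZMod 2)) ∨ p = (0, 1)) →
      (q = ((1 : ZMod 2), (0 : ZMod 2)) ∨ q = (0, 1)) → p ≠ q → p * q = 0 := by decide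
  have h1 : e s * e vs = 0 := by rw [← map_mul, hsvs, map_zero]
  have h2 : e t * e vt = 0 := by rw [← map_mul, htvt, map_zero]
  have := key2 (e s) (e t)
    (key1 (e s) (e vs) (fun hh => hs0 (he0 _ hh)) (fun hh => hvs0 (he0 _ hh)) h1)
    (key1 (e t) (e vt) (fun hh => ht0 (he0 _ hh)) (fun hh => hvt0 (he0 _ hh)) h2)
    (fun hh => hne (e.injective hh))
  rw [← map_mul] at this
  exact hprod (he0 _ this)

/-- backward direction, case (ii) -/
lemma ediam_eq_two_of_ideal (hI : ∃ I : Ideal R, (I : Set R) = zdSet R)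
    (hsq : ∃ x ∈ zdSet R, ∃ y ∈ zdSet R, x * y ≠ 0)
    (hann : ∀ x ∈ zdSet R, ∀ y ∈ zdSet R, x ≠ y →
      ∃ a : R, a ≠ 0 ∧ a * x = 0 ∧ a * y = 0) :
    (zdGraph R).ediam = 2 := by
  obtain ⟨I, hIeq⟩ := hI
  have hmemI : ∀ r : R, r ∈ zdSet R ↔ r ∈ I := by
    intro r; rw [← hIeq]; rfl
  refine le_antisymm ?_ ?_
  · -- upper bound
    apply ediam_le_two_of
    intro s t hs ht hne hprod
    obtain ⟨a, ha0, has, hat⟩ := hann s hs.2 t ht.2 hne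
    refine ⟨a, ⟨ha0, s, hs.1, has⟩, ?_, ?_, by rw [mul_comm]; exact has, hat⟩
    · exact fun hh => hprod (hh ▸ hat)
    · intro hh; apply hprod; rw [mul_comm]; exact hh ▸ has
  · -- lower bound
    obtain ⟨x, hx, y, hy, hxy⟩ := hsq
    have hx0 : x ≠ 0 := fun h => hxy (by rw [h, zero_mul])
    have hy0 : y ≠ 0 := fun h => hxy (by rw [h, mul_zero])
    by_cases hne : x = y
    · subst hne
      obtain ⟨v, hv0, hxv⟩ := hx
      have hvZ : v ∈ zdSet R := ⟨x, hx0, by rw [mul_comm]; exact hxv⟩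
      have htZ : x + v ∈ zdSet R := by
        rw [hmemI] at hvZ ⊢
        exact I.add_mem ((hmemI x).mp ⟨v, hv0, hxv⟩) hvZ
      have ht0 : x + v ≠ 0 := fun hh => hxy (by linear_combination x * hh - hxv)
      have hprod2 : x * (x + v) ≠ 0 := fun hh => hxy (by linear_combination hh - hxv)
      have hneq : x ≠ x + v := fun hh => hv0 (by linear_combination -hh)
      exact two_le_ediam_of x (x + v) ⟨hx0, v, hv0, hxv⟩ ⟨ht0, htZ⟩ hneq hprod2
    · exact two_le_ediam_of x y ⟨hx0, hx⟩ ⟨hy0, hy⟩ hne hxy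

/-- forward direction, case Z(R) ideal -/
lemma forward_ideal_case (h2 : (zdGraph R).ediam = 2) (I : Ideal R)
    (hIeq : (I : Set R) = zdSet R) :
    (∃ x ∈ zdSet R, ∃ y ∈ zdSet R, x * y ≠ 0) ∧
      (∀ x ∈ zdSet R, ∀ y ∈ zdSet R, x ≠ y →
        ∃ a : R, a ≠ 0 ∧ a * x = 0 ∧ a * y = 0) := by
  have hmemI : ∀ r : R, r ∈ zdSet R ↔ r ∈ I := by
    intro r; rw [← hIeq]; rfl
  have hP := P2_of_ediam h2
  constructor
  · obtain ⟨s, t, hs, ht, hne, hprod⟩ := exists_nonadj h2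
    exact ⟨s, hs.2, t, ht.2, hprod⟩
  · intro x hx y hy hne
    by_cases hx0 : x = 0
    · subst hx0
      have hy0 : y ≠ 0 := fun hh => hne hh.symm
      obtain ⟨v, hv0, hyv⟩ := hy
      exact ⟨v, hv0, mul_zero v, by rw [mul_comm]; exact hyv⟩
    by_cases hy0 : y = 0
    · subst hy0
      obtain ⟨v, hv0, hxv⟩ := hx
      exact ⟨v, hv0, by rw [mul_comm]; exact hxv, mul_zero v⟩
    by_cases hxy : x * y = 0
    · by_cases hxx : x * x = 0
      · exact ⟨x, hx0, hxx, hxy⟩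
      by_cases hyy : y * y = 0
      · exact ⟨y, hy0, by rw [mul_comm]; exact hxy, hyy⟩
      · have htZ : x + y ∈ zdSet R := by
          rw [hmemI]
          exact I.add_mem ((hmemI x).mp hx) ((hmemI y).mp hy)
        have ht0 : x + y ≠ 0 := fun hh => hxx (by linear_combination x * hh - hxy)
        have hxt : x ≠ x + y := fun hh => hy0 (by linear_combination -hh)
        have hprod2 : x * (x + y) ≠ 0 := fun hh => hxx (by linear_combination hh - hxy)
        obtain ⟨a, ha0, hax, hat⟩ := hP x (x + y) ⟨hx0, hx⟩ ⟨ht0, htZ⟩ hxt hprod2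
        exact ⟨a, ha0, hax, by linear_combination hat - hax⟩
    · obtain ⟨a, ha0, hax, hay⟩ := hP x y ⟨hx0, hx⟩ ⟨hy0, hy⟩ hne hxy
      exact ⟨a, ha0, hax, hay⟩


/-- no edges within the side `ann(y)` -/
lemma noEdge_aux (hP : P2 R) (x y : R) (hxS : x ∈ zdStar R) (hyS : y ∈ zdStar R)
    (xy0 : x * y = 0) (R1 : ∀ m : R, m * x = 0 → m * y = 0 → m = 0)
    (SPLIT : ∀ u : R, u ∈ zdStar R → u * x = 0 ∨ u * y = 0) :
    ∀ u v : R, u ≠ 0 → v ≠ 0 → u * y = 0 → v * y = 0 → u * v ≠ 0 := by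
  intro u v hu0 hv0 huy hvy huv
  have hux : u * x ≠ 0 := fun h => hu0 (R1 u h huy)
  have hvx : v * x ≠ 0 := fun h => hv0 (R1 v h hvy)
  have huS : u ∈ zdStar R := ⟨hu0, v, hv0, huv⟩
  have hvS : v ∈ zdStar R := ⟨hv0, u, hu0, by linear_combination huv⟩
  have hu_ne_x : u ≠ x := by
    intro h
    apply hvx
    rw [← h]
    linear_combination huv
  obtain ⟨c, hc0, hcu, hcx⟩ := hP u x huS hxS hu_ne_x hux
  have hcy : c * y ≠ 0 := fun h => hc0 (R1 c hcx h)
  by_cases hvc : v * c = 0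
  · have hne0 : u + c ≠ 0 := by
      intro h
      exact hux (by linear_combination x * h - hcx)
    have hS : u + c ∈ zdStar R := ⟨hne0, v, hv0, by linear_combination huv + hvc⟩
    rcases SPLIT (u + c) hS with h | h
    · exact hux (by linear_combination h - hcx)
    · exact hcy (by linear_combination h - huy)
  · have hv_ne_c : v ≠ c := fun h => hcy (h ▸ hvy)
    have hcS : c ∈ zdStar R := ⟨hc0, u, hu0, by linear_combination hcu⟩
    obtain ⟨t, ht0, htv, htc⟩ := hP v c hvS hcS hv_ne_c hvc
    have hne0 : v + c ≠ 0 := by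
      intro h
      exact hvx (by linear_combination x * h - hcx)
    have hS : v + c ∈ zdStar R := ⟨hne0, t, ht0, by linear_combination htv + htc⟩
    rcases SPLIT (v + c) hS with h | h
    · exact hvx (by linear_combination h - hcx)
    · exact hcy (by linear_combination h - hvy)

/-- forward direction, case Z(R) not an ideal: embedding into a product of two domains -/
lemma forward_nonideal_case (hP : P2 R) (x y : R)
    (hx : x ∈ zdSet R) (hy : y ∈ zdSet R)
    (hreg : ∀ v : R, (x + y) * v = 0 → v = 0) :
    ∃ (D₁ : Type u) (D₂ : Type u) (_ : CommRing D₁) (_ : CommRing D₂)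
      (_ : IsDomain D₁) (_ : IsDomain D₂) (f : R →+* D₁ × D₂), Function.Injective f := by
  obtain ⟨vx, hvx0, hxvx⟩ := hx
  obtain ⟨vy, hvy0, hyvy⟩ := hy
  have hx0 : x ≠ 0 := by
    intro h
    exact hvy0 (hreg vy (by rw [h, zero_add]; exact hyvy))
  have hy0 : y ≠ 0 := by
    intro h
    exact hvx0 (hreg vx (by rw [h, add_zero]; exact hxvx))
  have hxS : x ∈ zdStar R := ⟨hx0, vx, hvx0, hxvx⟩
  have hyS : y ∈ zdStar R := ⟨hy0, vy, hvy0, hyvy⟩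
  have hxy : x ≠ y := by
    intro h
    apply hvx0
    apply hreg
    rw [← h]
    linear_combination 2 * hxvx
  have xy0 : x * y = 0 := by
    by_contra hne
    obtain ⟨a, ha0, hax, hay⟩ := hP x y hxS hyS hxy hne
    exact ha0 (hreg a (by linear_combination hax + hay))
  have R1 : ∀ m : R, m * x = 0 → m * y = 0 → m = 0 := fun m h1 h2 =>
    hreg m (by linear_combination h1 + h2)
  have hx2 : x * x ≠ 0 := fun h => hx0 (R1 x h xy0)
  have hy2 : y * y ≠ 0 := fun h => hy0 (R1 y (by linear_combination xy0) h)
  -- the splitting lemma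
  have SPLIT : ∀ u : R, u ∈ zdStar R → u * x = 0 ∨ u * y = 0 := by
    intro u huS
    obtain ⟨hu0, v, hv0, huv⟩ := huS
    by_contra hc
    push_neg at hc
    obtain ⟨hux, huy⟩ := hc
    have hu_ne_x : u ≠ x := fun h => huy (by rw [h]; exact xy0)
    have hu_ne_y : u ≠ y := fun h => hux (by rw [h]; linear_combination xy0)
    obtain ⟨a, ha0, hau, hax⟩ := hP u x ⟨hu0, v, hv0, huv⟩ hxS hu_ne_x hux
    obtain ⟨b, hb0, hbu, hby⟩ := hP u y ⟨hu0, v, hv0, huv⟩ hyS hu_ne_y huy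
    have hv30 : x + u * y ≠ 0 := fun h => hx2 (by linear_combination x * h - u * xy0)
    have hv40 : y + u * x ≠ 0 := fun h => hy2 (by linear_combination y * h - u * (by linear_combination xy0 : y * x = 0))
    have hav3 : (x + u * y) * a = 0 := by linear_combination hax + y * hau
    have hbv4 : (y + u * x) * b = 0 := by linear_combination hby + x * hbu
    have hv3S : x + u * y ∈ zdStar R := ⟨hv30, a, ha0, hav3⟩
    have hv4S : y + u * x ∈ zdStar R := ⟨hv40, b, hb0, hbv4⟩
    have hne34 : x + u * y ≠ y + u * x := by
      intro h
      have hkx : (x - u * x) * x = 0 := by linear_combination x * h + (1 - u) * xy0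
      have hky : (x - u * x) * y = 0 := by linear_combination (1 - u) * xy0
      have hk0 : x - u * x = 0 := R1 _ hkx hky
      -- then y + u * x = x + y is a zero divisor, contradiction
      apply hb0
      apply hreg
      linear_combination hbv4 + b * hk0
    have hprod34 : (x + u * y) * (y + u * x) ≠ 0 := by
      intro h
      have h1 : (x + y) * ((x + y) * u) = 0 := by
        linear_combination h + (2 * u - 1 - u * u) * xy0
      exact hu0 (hreg u (hreg _ h1))
    obtain ⟨m, hm0, hm3, hm4⟩ := hP _ _ hv3S hv4S hne34 hprod34
    have hmx : m * x = 0 := by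
      refine R1 (m * x) ?_ ?_
      · linear_combination x * hm3 - m * u * xy0
      · linear_combination m * xy0
    have hmy : m * y = 0 := by
      refine R1 (m * y) ?_ ?_
      · linear_combination m * xy0
      · linear_combination y * hm4 - m * u * xy0
    exact hm0 (R1 m hmx hmy)
  -- no edges within each side
  have hA : ∀ u v : R, u ≠ 0 → v ≠ 0 → u * y = 0 → v * y = 0 → u * v ≠ 0 :=
    noEdge_aux hP x y hxS hyS xy0 R1 SPLIT
  have hB : ∀ u v : R, u ≠ 0 → v ≠ 0 → u * x = 0 → v * x = 0 → u * v ≠ 0 := by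
    apply noEdge_aux hP y x hyS hxS (by linear_combination xy0)
      (fun m h1 h2 => R1 m h2 h1)
    intro u huS
    exact (SPLIT u huS).symm
  -- the two annihilator ideals
  let I₁ : Ideal R :=
    { carrier := {r : R | r * x = 0}
      add_mem' := fun {a b} ha hb => by
        simp only [Set.mem_setOf_eq] at *
        linear_combination ha + hb
      zero_mem' := by simp
      smul_mem' := fun c a ha => by
        simp only [Set.mem_setOf_eq, smul_eq_mul] at *
        linear_combination c * ha }
  let I₂ : Ideal R :=
    { carrier := {r : R | r * y = 0}
      add_mem' := fun {a b} ha hb => by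
        simp only [Set.mem_setOf_eq] at *
        linear_combination ha + hb
      zero_mem' := by simp
      smul_mem' := fun c a ha => by
        simp only [Set.mem_setOf_eq, smul_eq_mul] at *
        linear_combination c * ha }
  have hI₁mem : ∀ r : R, r ∈ I₁ ↔ r * x = 0 := fun r => Iff.rfl
  have hI₂mem : ∀ r : R, r ∈ I₂ ↔ r * y = 0 := fun r => Iff.rfl
  have hI₁prime : I₁.IsPrime := by
    constructor
    · intro h
      have : (1 : R) ∈ I₁ := h ▸ Submodule.mem_top
      rw [hI₁mem, one_mul] at this
      exact hx0 this
    · intro r s hrs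
      rw [hI₁mem] at hrs
      by_contra hcon
      push_neg at hcon
      obtain ⟨hr, hs⟩ := hcon
      rw [hI₁mem] at hr hs
      exact hA (r * x) (s * x) hr hs (by linear_combination r * xy0)
        (by linear_combination s * xy0) (by linear_combination x * hrs)
  have hI₂prime : I₂.IsPrime := by
    constructor
    · intro h
      have : (1 : R) ∈ I₂ := h ▸ Submodule.mem_top
      rw [hI₂mem, one_mul] at this
      exact hy0 this
    · intro r s hrs
      rw [hI₂mem] at hrs
      by_contra hcon
      push_neg at hcon
      obtain ⟨hr, hs⟩ := hcon
      rw [hI₂mem] at hr hs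
      exact hB (r * y) (s * y) hr hs (by linear_combination r * xy0)
        (by linear_combination s * xy0) (by linear_combination y * hrs)
  haveI := hI₁prime
  haveI := hI₂prime
  refine ⟨R ⧸ I₁, R ⧸ I₂, inferInstance, inferInstance, inferInstance, inferInstance,
    (Ideal.Quotient.mk I₁).prod (Ideal.Quotient.mk I₂), ?_⟩
  rw [injective_iff_map_eq_zero]
  intro a ha
  rw [RingHom.prod_apply, Prod.mk_eq_zero] at ha
  obtain ⟨ha1, ha2⟩ := ha
  rw [Ideal.Quotient.eq_zero_iff_mem, hI₁mem] at ha1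
  rw [Ideal.Quotient.eq_zero_iff_mem, hI₂mem] at ha2
  exact R1 a ha1 ha2

variable {D₁ : Type u} {D₂ : Type u} [CommRing D₁] [CommRing D₂] [IsDomain D₁] [IsDomain D₂]

lemma cls (f : R →+* D₁ × D₂) (hf : Function.Injective f) :
    ∀ s : R, s ∈ zdStar R →
      (((f s).1 ≠ 0 ∧ (f s).2 = 0) ∧ ∃ v, v ∈ zdStar R ∧ ((f v).1 = 0 ∧ (f v).2 ≠ 0) ∧ s * v = 0)
      ∨ (((f s).1 = 0 ∧ (f s).2 ≠ 0) ∧ ∃ v, v ∈ zdStar R ∧ ((f v).1 ≠ 0 ∧ (f v).2 = 0) ∧ s * v = 0) := by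
  have hf0 : ∀ r : R, f r = 0 → r = 0 := fun r h => hf (by rw [h, map_zero])
  rintro s ⟨hs0, v, hv0, hsv⟩
  have hfs : f s ≠ 0 := fun h => hs0 (hf0 _ h)
  have hfv : f v ≠ 0 := fun h => hv0 (hf0 _ h)
  have hm : f s * f v = 0 := by rw [← map_mul, hsv, map_zero]
  have h1 : (f s).1 * (f v).1 = 0 := by
    have := congrArg Prod.fst hm; simpa using this
  have h2 : (f s).2 * (f v).2 = 0 := by
    have := congrArg Prod.snd hm; simpa using this
  have hvS : v ∈ zdStar R := ⟨hv0, s, hs0, by linear_combination hsv⟩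
  by_cases hc : (f s).1 = 0
  · have hs2 : (f s).2 ≠ 0 := by
      intro h; exact hfs (Prod.ext hc h)
    have hv2 : (f v).2 = 0 := (mul_eq_zero.mp h2).resolve_left hs2
    have hv1 : (f v).1 ≠ 0 := by
      intro h; exact hfv (Prod.ext h hv2)
    exact Or.inr ⟨⟨hc, hs2⟩, v, hvS, ⟨hv1, hv2⟩, hsv⟩
  · have hv1 : (f v).1 = 0 := (mul_eq_zero.mp h1).resolve_left hc
    have hv2 : (f v).2 ≠ 0 := by
      intro h; exact hfv (Prod.ext hv1 h)
    have hs2 : (f s).2 = 0 := (mul_eq_zero.mp h2).resolve_right hv2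
    exact Or.inl ⟨⟨hc, hs2⟩, v, hvS, ⟨hv1, hv2⟩, hsv⟩

lemma ediam_le_two_of_embed (f : R →+* D₁ × D₂) (hf : Function.Injective f) :
    (zdGraph R).ediam ≤ 2 := by
  have hf0 : ∀ r : R, f r = 0 → r = 0 := fun r h => hf (by rw [h, map_zero])
  apply ediam_le_two_of
  intro s t hs ht hne hprod
  rcases cls f hf s hs with ⟨⟨hs1, hs2⟩, v, hvS, ⟨hv1, hv2⟩, hsv⟩ |
      ⟨⟨hs1, hs2⟩, v, hvS, ⟨hv1, hv2⟩, hsv⟩ <;>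
    rcases cls f hf t ht with ⟨⟨ht1, ht2⟩, w, hwS, ⟨hw1, hw2⟩, htw⟩ |
      ⟨⟨ht1, ht2⟩, w, hwS, ⟨hw1, hw2⟩, htw⟩
  · -- both type 1 : use v
    refine ⟨v, hvS, fun h => hs1 (by rw [← h]; exact hv1), fun h => ht1 (by rw [← h]; exact hv1),
      hsv, hf0 _ ?_⟩
    rw [map_mul]
    exact Prod.ext (by simp [hv1]) (by simp [ht2])
  · -- s type 1, t type 2 : product is zero, contradiction
    exact absurd (hf0 _ (by rw [map_mul]; exact Prod.ext (by simp [ht1]) (by simp [hs2]))) hprod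
  · exact absurd (hf0 _ (by rw [map_mul]; exact Prod.ext (by simp [hs1]) (by simp [ht2]))) hprod
  · refine ⟨v, hvS, fun h => hv1 (by rw [h]; exact hs1), fun h => hv1 (by rw [h]; exact ht1),
      hsv, hf0 _ ?_⟩
    rw [map_mul]
    exact Prod.ext (by simp [ht1]) (by simp [hv2])

lemma iso_of_complete_aux (f : R →+* D₁ × D₂) (hf : Function.Injective f)
    (hcomp : ∀ s t : R, s ∈ zdStar R → t ∈ zdStar R → s ≠ t → s * t = 0)
    (α β : R) (hαS : α ∈ zdStar R) (hβS : β ∈ zdStar R)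
    (hα1 : (f α).1 ≠ 0) (hα2 : (f α).2 = 0) (hβ1 : (f β).1 = 0) (hβ2 : (f β).2 ≠ 0) :
    Nonempty (R ≃+* (ZMod 2 × ZMod 2)) := by
  classical
  have hf0 : ∀ r : R, f r = 0 → r = 0 := fun r h => hf (by rw [h, map_zero])
  have hα0 : α ≠ 0 := hαS.1
  have hβ0 : β ≠ 0 := hβS.1
  -- uniqueness of the two types
  have uniq1 : ∀ γ : R, γ ∈ zdStar R → (f γ).2 = 0 → γ = α := by
    intro γ hγS h2
    by_contra hne
    have h0 : γ * α = 0 := hcomp γ α hγS hαS hne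
    have : f γ * f α = 0 := by rw [← map_mul, h0, map_zero]
    have h1 : (f γ).1 * (f α).1 = 0 := by have := congrArg Prod.fst this; simpa using this
    have hγ1 : (f γ).1 = 0 := (mul_eq_zero.mp h1).resolve_right hα1
    exact hγS.1 (hf0 _ (Prod.ext hγ1 h2))
  have uniq2 : ∀ γ : R, γ ∈ zdStar R → (f γ).1 = 0 → γ = β := by
    intro γ hγS h1
    by_contra hne
    have h0 : γ * β = 0 := hcomp γ β hγS hβS hne
    have : f γ * f β = 0 := by rw [← map_mul, h0, map_zero]
    have h2 : (f γ).2 * (f β).2 = 0 := by have := congrArg Prod.snd this; simpa using this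
    have hγ2 : (f γ).2 = 0 := (mul_eq_zero.mp h2).resolve_right hβ2
    exact hγS.1 (hf0 _ (Prod.ext h1 hγ2))
  -- α is idempotent with first coordinate 1
  have hαβ : α * β = 0 := hf0 _ (by rw [map_mul]; exact Prod.ext (by simp [hβ1]) (by simp [hα2]))
  have hααS : α * α ∈ zdStar R := by
    refine ⟨fun h => ?_, β, hβ0, by linear_combination α * hαβ⟩
    have := congrArg (fun r => (f r).1) h
    simp only [map_mul, Prod.fst_mul, map_zero, Prod.fst_zero] at this
    exact hα1 (mul_self_eq_zero.mp this)
  have hαα : α * α = α := uniq1 _ hααS (by simp [map_mul, hα2])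
  have e1 : (f α).1 = 1 := by
    have hsq : (f α).1 * (f α).1 = (f α).1 := by
      have := congrArg (fun r => (f r).1) hαα
      simpa [map_mul] using this
    rcases mul_eq_zero.mp (show (f α).1 * ((f α).1 - 1) = 0 by linear_combination hsq) with h | h
    · exact absurd h hα1
    · linear_combination h
  -- β is idempotent with second coordinate 1
  have hββS : β * β ∈ zdStar R := by
    refine ⟨fun h => ?_, α, hα0, by linear_combination β * hαβ⟩
    have := congrArg (fun r => (f r).2) h
    simp only [map_mul, Prod.snd_mul, map_zero, Prod.snd_zero] at this
    exact hβ2 (mul_self_eq_zero.mp this)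
  have hββ : β * β = β := uniq2 _ hββS (by simp [map_mul, hβ1])
  have e2 : (f β).2 = 1 := by
    have hsq : (f β).2 * (f β).2 = (f β).2 := by
      have := congrArg (fun r => (f r).2) hββ
      simpa [map_mul] using this
    rcases mul_eq_zero.mp (show (f β).2 * ((f β).2 - 1) = 0 by linear_combination hsq) with h | h
    · exact absurd h hβ2
    · linear_combination h
  -- all coordinates are 0 or 1
  have coords1 : ∀ r : R, (f r).1 = 0 ∨ (f r).1 = 1 := by
    intro r
    by_cases h : (f r).1 = 0
    · exact Or.inl h
    right
    have hne0 : r * α ≠ 0 := by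
      intro hh
      apply h
      have := congrArg (fun z => (f z).1) hh
      simpa [map_mul, e1] using this
    have hkill : (r * α) * β = 0 := hf0 _ (by
      rw [map_mul, map_mul]
      exact Prod.ext (by simp [hβ1]) (by simp [hα2]))
    have hS : r * α ∈ zdStar R := ⟨hne0, β, hβ0, hkill⟩
    have hcoe : r * α = α := uniq1 _ hS (by simp [map_mul, hα2])
    have := congrArg (fun z => (f z).1) hcoe
    simpa [map_mul, e1] using this
  have coords2 : ∀ r : R, (f r).2 = 0 ∨ (f r).2 = 1 := by
    intro r
    by_cases h : (f r).2 = 0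
    · exact Or.inl h
    right
    have hne0 : r * β ≠ 0 := by
      intro hh
      apply h
      have := congrArg (fun z => (f z).2) hh
      simpa [map_mul, e2] using this
    have hkill : (r * β) * α = 0 := hf0 _ (by
      rw [map_mul, map_mul]
      exact Prod.ext (by simp [hβ1]) (by simp [hα2]))
    have hS : r * β ∈ zdStar R := ⟨hne0, α, hα0, hkill⟩
    have hcoe : r * β = β := uniq2 _ hS (by simp [map_mul, hβ1])
    have := congrArg (fun z => (f z).2) hcoe
    simpa [map_mul, e2] using this
  -- characteristic two
  have char1 : (1 : D₁) + 1 = 0 := by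
    have hsum : (f (α + α)).1 = 1 + 1 := by simp [map_add, e1]
    rcases coords1 (α + α) with h | h
    · rw [hsum] at h; exact h
    · rw [hsum] at h
      exact absurd (show (1 : D₁) = 0 by linear_combination h) one_ne_zero
  have char2 : (1 : D₂) + 1 = 0 := by
    have hsum : (f (β + β)).2 = 1 + 1 := by simp [map_add, e2]
    rcases coords2 (β + β) with h | h
    · rw [hsum] at h; exact h
    · rw [hsum] at h
      exact absurd (show (1 : D₂) = 0 by linear_combination h) one_ne_zero
  -- the ring homomorphism to ZMod 2 × ZMod 2
  set gfun : R → ZMod 2 × ZMod 2 :=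
    fun r => (if (f r).1 = 0 then 0 else 1, if (f r).2 = 0 then 0 else 1) with hgfun
  have hone : gfun 1 = 1 := by
    simp [hgfun, map_one]
  have hzero : gfun 0 = 0 := by
    simp [hgfun, map_zero]
  have hmul : ∀ r s : R, gfun (r * s) = gfun r * gfun s := by
    intro r s
    have h1 : (f (r * s)).1 = (f r).1 * (f s).1 := by simp [map_mul]
    have h2 : (f (r * s)).2 = (f r).2 * (f s).2 := by simp [map_mul]
    simp only [hgfun, h1, h2, Prod.mk_mul_mk, Prod.mk.injEq]
    refine ⟨?_, ?_⟩
    · by_cases hr : (f r).1 = 0 <;> by_cases hs : (f s).1 = 0 <;>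
        simp [hr, hs, mul_eq_zero]
    · by_cases hr : (f r).2 = 0 <;> by_cases hs : (f s).2 = 0 <;>
        simp [hr, hs, mul_eq_zero]
  have hadd : ∀ r s : R, gfun (r + s) = gfun r + gfun s := by
    intro r s
    have h1 : (f (r + s)).1 = (f r).1 + (f s).1 := by simp [map_add]
    have h2 : (f (r + s)).2 = (f r).2 + (f s).2 := by simp [map_add]
    simp only [hgfun, h1, h2, Prod.mk_add_mk, Prod.mk.injEq]
    refine ⟨?_, ?_⟩
    · rcases coords1 r with hr | hr <;> rcases coords1 s with hs | hs <;>
        simp [hr, hs, char1, one_ne_zero] <;> decide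
    · rcases coords2 r with hr | hr <;> rcases coords2 s with hs | hs <;>
        simp [hr, hs, char2, one_ne_zero] <;> decide
  let g : R →+* ZMod 2 × ZMod 2 :=
    { toFun := gfun, map_one' := hone, map_mul' := hmul, map_zero' := hzero,
      map_add' := hadd }
  have hg : ∀ r : R, g r = gfun r := fun r => rfl
  have hinj : Function.Injective g := by
    intro r s h
    rw [hg, hg] at h
    have h1 := congrArg Prod.fst h
    have h2 := congrArg Prod.snd h
    simp only [hgfun] at h1 h2
    apply hf
    refine Prod.ext ?_ ?_
    · rcases coords1 r with hr | hr <;> rcases coords1 s with hs | hs <;>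
        rw [hr, hs] <;> simp [hr, hs, one_ne_zero] at h1 ⊢
    · rcases coords2 r with hr | hr <;> rcases coords2 s with hs | hs <;>
        rw [hr, hs] <;> simp [hr, hs, one_ne_zero] at h2 ⊢
  have hsurj : Function.Surjective g := by
    intro z
    have hz : ∀ w : ZMod 2 × ZMod 2, w = 0 ∨ w = (1, 0) ∨ w = (0, 1) ∨ w = 1 := by decide
    rcases hz z with h | h | h | h
    · exact ⟨0, by rw [hg, hzero, h]⟩
    · refine ⟨α, by rw [hg, h]; simp [hgfun, e1, hα2]⟩
    · refine ⟨β, by rw [hg, h]; simp [hgfun, hβ1, e2]⟩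
    · exact ⟨1, by rw [hg, hone, h]⟩
  exact ⟨RingEquiv.ofBijective g ⟨hinj, hsurj⟩⟩

lemma iso_of_complete (hcard : (zdStar R).Nontrivial)
    (f : R →+* D₁ × D₂) (hf : Function.Injective f)
    (hcomp : ∀ s t : R, s ∈ zdStar R → t ∈ zdStar R → s ≠ t → s * t = 0) :
    Nonempty (R ≃+* (ZMod 2 × ZMod 2)) := by
  obtain ⟨α, hαS, β, hβS, hne⟩ := hcard
  have hsame : ∀ γ δ : R, γ ∈ zdStar R → δ ∈ zdStar R → γ ≠ δ →
      ((f γ).1 ≠ 0 ∧ (f γ).2 = 0) → ((f δ).1 ≠ 0 ∧ (f δ).2 = 0) → False := by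
    intro γ δ hγ hδ hne' h1 h2
    have h0 : γ * δ = 0 := hcomp γ δ hγ hδ hne'
    have : f γ * f δ = 0 := by rw [← map_mul, h0, map_zero]
    have hm : (f γ).1 * (f δ).1 = 0 := by
      have := congrArg Prod.fst this; simpa using this
    rcases mul_eq_zero.mp hm with h | h
    · exact h1.1 h
    · exact h2.1 h
  have hsame2 : ∀ γ δ : R, γ ∈ zdStar R → δ ∈ zdStar R → γ ≠ δ →
      ((f γ).1 = 0 ∧ (f γ).2 ≠ 0) → ((f δ).1 = 0 ∧ (f δ).2 ≠ 0) → False := by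
    intro γ δ hγ hδ hne' h1 h2
    have h0 : γ * δ = 0 := hcomp γ δ hγ hδ hne'
    have : f γ * f δ = 0 := by rw [← map_mul, h0, map_zero]
    have hm : (f γ).2 * (f δ).2 = 0 := by
      have := congrArg Prod.snd this; simpa using this
    rcases mul_eq_zero.mp hm with h | h
    · exact h1.2 h
    · exact h2.2 h
  rcases cls f hf α hαS with ⟨hα, _⟩ | ⟨hα, _⟩ <;>
    rcases cls f hf β hβS with ⟨hβ, _⟩ | ⟨hβ, _⟩
  · exact absurd (hsame α β hαS hβS hne hα hβ) not_false
  · exact iso_of_complete_aux f hf hcomp α β hαS hβS hα.1 hα.2 hβ.1 hβ.2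
  · exact iso_of_complete_aux f hf hcomp β α hβS hαS hβ.1 hβ.2 hα.1 hα.2
  · exact absurd (hsame2 α β hαS hβS hne hα hβ) not_false

lemma exists_reg_pair (h : ¬ ∃ I : Ideal R, (I : Set R) = zdSet R) :
    ∃ x y : R, x ∈ zdSet R ∧ y ∈ zdSet R ∧ ∀ v : R, (x + y) * v = 0 → v = 0 := by
  by_contra hno
  push_neg at hno
  apply h
  refine ⟨{ carrier := zdSet R
            zero_mem' := ⟨1, one_ne_zero, zero_mul 1⟩
            add_mem' := by
              intro a b ha hb
              obtain ⟨v, hv, hv0⟩ := hno a b ha hb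
              exact ⟨v, hv0, hv⟩
            smul_mem' := by
              rintro c x ⟨v, hv0, hxv⟩
              exact ⟨v, hv0, by simp only [smul_eq_mul]; linear_combination c * hxv⟩ }, rfl⟩

end Aux


theorem stmt10 (R : Type u) [CommRing R] [Nontrivial R]
    (hcard : (zdStar R).Nontrivial) :
    (zdGraph R).ediam = 2 ↔
      (((∃ (D₁ : Type u) (D₂ : Type u) (_ : CommRing D₁) (_ : CommRing D₂)
      (_ : IsDomain D₁) (_ : IsDomain D₂) (f : R →+* D₁ × D₂), Function.Injective f) ∧ ¬ Nonempty (R ≃+* (ZMod 2 × ZMod 2))) ∨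
       ((∃ I : Ideal R, (I : Set R) = zdSet R) ∧ (∃ x ∈ zdSet R, ∃ y ∈ zdSet R, x * y ≠ 0) ∧
        (∀ x ∈ zdSet R, ∀ y ∈ zdSet R, x ≠ y → ∃ a : R, a ≠ 0 ∧ a * x = 0 ∧ a * y = 0))) := by
  constructor
  · intro h2
    by_cases hid : ∃ I : Ideal R, (I : Set R) = zdSet R
    · right
      obtain ⟨I, hIeq⟩ := hid
      obtain ⟨hsq, hann⟩ := forward_ideal_case h2 I hIeq
      exact ⟨⟨I, hIeq⟩, hsq, hann⟩
    · left
      obtain ⟨x, y, hx, hy, hreg⟩ := exists_reg_pair hid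
      exact ⟨forward_nonideal_case (P2_of_ediam h2) x y hx hy hreg, not_iso_of_ediam h2⟩
  · rintro (⟨⟨D1, D2, i1, i2, i3, i4, f, hf⟩, hniso⟩ | ⟨hI, hsq, hann⟩)
    · refine le_antisymm (ediam_le_two_of_embed f hf) ?_
      by_cases hcomp : ∀ s t : R, s ∈ zdStar R → t ∈ zdStar R → s ≠ t → s * t = 0
      · exact absurd (iso_of_complete hcard f hf hcomp) hniso
      · push_neg at hcomp
        obtain ⟨s, t, hs, ht, hne, hprod⟩ := hcomp
        exact two_le_ediam_of s t hs ht hne hprod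
    · exact ediam_eq_two_of_ideal hI hsq hann
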